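/- Let the sequences R^(k), P^(k), X^(k) be generated by the conjugate-gradient-type iteration: R^(1) = D − A*_M X^(1) − X^(1)*_N C, P^(1) = Aᵀ*_M R^(1) + R^(1)*_N Cᵀ; X^(k+1) = X^(k) + (‖R^(k)‖²/‖P^(k)‖²) P^(k); R^(k+1) = D − A*_M X^(k+1) − X^(k+1)*_N C; P^(k+1) = Aᵀ*_M R^(k+1) + R^(k+1)*_N Cᵀ + (‖R^(k+1)‖²/‖R^(k)‖²) P^(k). Assuming all R^(k), P^(k) are nonzero for k < t, then for all i ≠ j with i, j ≤ t: tr((R^(i))ᵀ *_M R^(j)) = 0 and tr((P^(i))ᵀ *_M P^(j)) = 0. -/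

import Mathlib

open scoped BigOperators

/-- Multi-index of shape `I₁ × ⋯ × I_M`. -/
abbrev MIdx {M : ℕ} (I : Fin M → ℕ) := (k : Fin M) → Fin (I k)

/-- Einstein product: contraction over the shared (middle) index group. -/
def eprod {α β γ : Type*} [Fintype β] (A : α → β → ℝ) (B : β → γ → ℝ) :
    α → γ → ℝ := fun a c => ∑ b, A a b * B b c

/-- Generalized trace of a square tensor. -/
def ttrace {α : Type*} [Fintype α] (A : α → α → ℝ) : ℝ := ∑ a, A a a

/-- Transpose: swaps the two index groups. -/
def ttr {α β : Type*} (A : α → β → ℝ) : β → α → ℝ := fun b a => A a b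

/-- Frobenius inner product ⟨X, Y⟩ = tr(Yᵀ * X). -/
noncomputable def frobInner {α β : Type*} [Fintype α] [Fintype β]
    (X Y : α → β → ℝ) : ℝ := ttrace (eprod (ttr Y) X)

/-- Frobenius norm of a tensor. -/
noncomputable def tnorm {α β : Type*} [Fintype α] [Fintype β]
    (X : α → β → ℝ) : ℝ := Real.sqrt (frobInner X X)

/-- Kronecker product of tensors (blockwise). -/
def kron {α β γ δ : Type*} (A : α → β → ℝ) (B : γ → δ → ℝ) :
    α × γ → β × δ → ℝ := fun p q => A p.1 q.1 * B p.2 q.2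

/-- Vec: lines up the row-group slices into a single column index. -/
def tVec {α β : Type*} (X : α → β → ℝ) : β × α → ℝ := fun p => X p.2 p.1

/-- Einstein product of a tensor with a vectorized tensor. -/
def evec {α β : Type*} [Fintype β] (A : α → β → ℝ) (x : β → ℝ) : α → ℝ :=
  fun a => ∑ b, A a b * x b

/-- Identity tensor. -/
def idT {α : Type*} [DecidableEq α] : α → α → ℝ := fun a b => if a = b then 1 else 0
set_option linter.unusedSectionVars false

section helpers
variable {α β : Type*} [Fintype α] [Fintype β]

lemma frobInner_eq (X Y : α → β → ℝ) :
    frobInner X Y = ∑ b, ∑ a, Y a b * X a b := rfl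

lemma frobInner_comm (X Y : α → β → ℝ) : frobInner X Y = frobInner Y X := by
  simp [frobInner_eq, mul_comm]

lemma frobInner_add_left (X Y Z : α → β → ℝ) :
    frobInner (X + Y) Z = frobInner X Z + frobInner Y Z := by
  simp [frobInner_eq, mul_add, Finset.sum_add_distrib]

lemma frobInner_sub_left (X Y Z : α → β → ℝ) :
    frobInner (X - Y) Z = frobInner X Z - frobInner Y Z := by
  simp [frobInner_eq, mul_sub, Finset.sum_sub_distrib]

lemma frobInner_smul_left (c : ℝ) (X Z : α → β → ℝ) :
    frobInner (c • X) Z = c * frobInner X Z := by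
  simp only [frobInner_eq, Pi.smul_apply, smul_eq_mul, Finset.mul_sum]
  exact Finset.sum_congr rfl fun b _ => Finset.sum_congr rfl fun a _ => by ring

lemma frobInner_add_right (X Y Z : α → β → ℝ) :
    frobInner Z (X + Y) = frobInner Z X + frobInner Z Y := by
  rw [frobInner_comm, frobInner_add_left, frobInner_comm X, frobInner_comm Y]

lemma frobInner_sub_right (X Y Z : α → β → ℝ) :
    frobInner Z (X - Y) = frobInner Z X - frobInner Z Y := by
  rw [frobInner_comm, frobInner_sub_left, frobInner_comm X, frobInner_comm Y]

lemma frobInner_smul_right (c : ℝ) (X Z : α → β → ℝ) :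
    frobInner Z (c • X) = c * frobInner Z X := by
  rw [frobInner_comm, frobInner_smul_left, frobInner_comm]

lemma frobInner_self_ne_zero (X : α → β → ℝ) (h : X ≠ 0) : frobInner X X ≠ 0 := by
  have h0 : frobInner X X = ∑ b, ∑ a, X a b * X a b := rfl
  intro hz
  apply h
  funext a b
  have hnn : ∀ b' ∈ (Finset.univ : Finset β), 0 ≤ ∑ a, X a b' * X a b' :=
    fun b' _ => Finset.sum_nonneg fun a _ => mul_self_nonneg _
  have h1 := (Finset.sum_eq_zero_iff_of_nonneg hnn).mp (h0 ▸ hz) b (Finset.mem_univ b)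
  have h2 := (Finset.sum_eq_zero_iff_of_nonneg
    (fun a _ => mul_self_nonneg (X a b))).mp h1 a (Finset.mem_univ a)
  exact mul_self_eq_zero.mp h2

lemma adj_leftA (A : α → α → ℝ) (X Y : α → β → ℝ) :
    frobInner (eprod A X) Y = frobInner X (eprod (ttr A) Y) := by
  simp only [frobInner_eq, eprod, ttr, Finset.mul_sum, Finset.sum_mul]
  refine Finset.sum_congr rfl fun b _ => ?_
  rw [Finset.sum_comm]
  exact Finset.sum_congr rfl fun a _ => Finset.sum_congr rfl fun c _ => by ring

lemma ttr_ttr (X : α → β → ℝ) : ttr (ttr X) = X := rfl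

lemma ttr_eprod {γ : Type*} [Fintype γ] (X : α → γ → ℝ) (Z : γ → β → ℝ) :
    ttr (eprod X Z) = eprod (ttr Z) (ttr X) := by
  funext b a
  simp only [ttr, eprod]
  exact Finset.sum_congr rfl fun g _ => by ring

lemma frobInner_ttr (X Y : α → β → ℝ) :
    frobInner (ttr X) (ttr Y) = frobInner X Y := by
  simp only [frobInner_eq, ttr]
  exact Finset.sum_comm

lemma adj_rightC (C : β → β → ℝ) (X Y : α → β → ℝ) :
    frobInner (eprod X C) Y = frobInner X (eprod Y (ttr C)) := by
  rw [← frobInner_ttr (eprod X C) Y, ttr_eprod, adj_leftA,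
    ← ttr_eprod, frobInner_ttr]

lemma adjL (A : α → α → ℝ) (C : β → β → ℝ) (X Y : α → β → ℝ) :
    frobInner (eprod A X + eprod X C) Y
      = frobInner X (eprod (ttr A) Y + eprod Y (ttr C)) := by
  rw [frobInner_add_left, frobInner_add_right, adj_leftA, adj_rightC]

lemma adjR (A : α → α → ℝ) (C : β → β → ℝ) (X Y : α → β → ℝ) :
    frobInner (eprod (ttr A) Y + eprod Y (ttr C)) X
      = frobInner Y (eprod A X + eprod X C) := by
  rw [frobInner_comm, ← adjL, frobInner_comm]

lemma eprod_add_right (A : α → α → ℝ) (X Y : α → β → ℝ) :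
    eprod A (X + Y) = eprod A X + eprod A Y := by
  funext a b; simp [eprod, mul_add, Finset.sum_add_distrib]

lemma eprod_smul_right (c : ℝ) (A : α → α → ℝ) (X : α → β → ℝ) :
    eprod A (c • X) = c • eprod A X := by
  funext a b
  simp only [eprod, Pi.smul_apply, smul_eq_mul, Finset.mul_sum]
  exact Finset.sum_congr rfl fun x _ => by ring

lemma eprod_add_left (C : β → β → ℝ) (X Y : α → β → ℝ) :
    eprod (X + Y) C = eprod X C + eprod Y C := by
  funext a b; simp [eprod, add_mul, Finset.sum_add_distrib]

lemma eprod_smul_left (c : ℝ) (C : β → β → ℝ) (X : α → β → ℝ) :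
    eprod (c • X) C = c • eprod X C := by
  funext a b
  simp only [eprod, Pi.smul_apply, smul_eq_mul, Finset.mul_sum]
  exact Finset.sum_congr rfl fun x _ => by ring

end helpers

theorem algorithm_orthogonality {M N : ℕ} (I : Fin M → ℕ) (J : Fin N → ℕ)
(A : MIdx I → MIdx I → ℝ) (C : MIdx J → MIdx J → ℝ)
    (D : MIdx I → MIdx J → ℝ)
    (X R P : ℕ → MIdx I → MIdx J → ℝ)
    (hR : ∀ k, 1 ≤ k → R k = D - (eprod A (X k) + eprod (X k) C))
    (hP1 : P 1 = eprod (ttr A) (R 1) + eprod (R 1) (ttr C))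
    (hX : ∀ k, 1 ≤ k →
      X (k + 1) = X k + (frobInner (R k) (R k) / frobInner (P k) (P k)) • P k)
    (hP : ∀ k, 1 ≤ k →
      P (k + 1) = eprod (ttr A) (R (k + 1)) + eprod (R (k + 1)) (ttr C)
        + (frobInner (R (k + 1)) (R (k + 1)) / frobInner (R k) (R k)) • P k)
    (t : ℕ) (hnz : ∀ k, 1 ≤ k → k < t → R k ≠ 0 ∧ P k ≠ 0) :
    ∀ i j, 1 ≤ i → i ≤ t → 1 ≤ j → j ≤ t → i ≠ j →
      ttrace (eprod (ttr (R i)) (R j)) = 0 ∧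
      ttrace (eprod (ttr (P i)) (P j)) = 0 := by
  have hRrec : ∀ k, 1 ≤ k →
      R (k+1) = R k - (frobInner (R k) (R k) / frobInner (P k) (P k)) •
        (eprod A (P k) + eprod (P k) C) := by
    intro k hk
    have h2 := hR (k+1) (by omega)
    rw [hX k hk, eprod_add_right, eprod_smul_right, eprod_add_left, eprod_smul_left] at h2
    rw [h2, hR k hk]
    funext a b
    simp only [Pi.sub_apply, Pi.add_apply, Pi.smul_apply, smul_eq_mul]
    ring
  have hLT : ∀ k, 1 ≤ k →
      eprod (ttr A) (R (k+1)) + eprod (R (k+1)) (ttr C)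
        = P (k+1) - (frobInner (R (k+1)) (R (k+1)) / frobInner (R k) (R k)) • P k := by
    intro k hk
    rw [hP k hk, add_sub_cancel_right]
  have key : ∀ k, k ≤ t → ∀ i, 1 ≤ i → i < k →
      frobInner (R k) (R i) = 0 ∧ frobInner (P k) (P i) = 0 := by
    intro k
    induction k using Nat.strong_induction_on with
    | _ k IH =>
      intro hkt i hi hik
      obtain ⟨m, rfl⟩ : ∃ m, k = m + 1 := ⟨k - 1, by omega⟩
      have hm1 : 1 ≤ m := by omega
      have hmt : m < t := by omega
      have hRm := frobInner_self_ne_zero _ (hnz m hm1 hmt).1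
      have hPm := frobInner_self_ne_zero _ (hnz m hm1 hmt).2
      have stepA : ∀ i, 1 ≤ i → i ≤ m → frobInner (R (m+1)) (R i) = 0 := by
        intro i hi him
        have expand : frobInner (R (m+1)) (R i)
            = frobInner (R m) (R i)
              - (frobInner (R m) (R m) / frobInner (P m) (P m)) *
                frobInner (P m) (eprod (ttr A) (R i) + eprod (R i) (ttr C)) := by
          rw [hRrec m hm1, frobInner_sub_left, frobInner_smul_left, adjL]
        rw [expand]
        rcases eq_or_lt_of_le him with heq | hlt
        · subst heq
          have hLTi : frobInner (P i) (eprod (ttr A) (R i) + eprod (R i) (ttr C))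
              = frobInner (P i) (P i) := by
            rcases eq_or_lt_of_le hi with h1 | h2
            · rw [← h1, ← hP1]
            · obtain ⟨n, rfl⟩ : ∃ n, i = n + 1 := ⟨i - 1, by omega⟩
              have hn1 : 1 ≤ n := by omega
              rw [hLT n hn1, frobInner_sub_right, frobInner_smul_right,
                (IH (n+1) (by omega) (by omega) n hn1 (by omega)).2]
              ring
          rw [hLTi]
          field_simp
          ring
        · have h1 := (IH m (by omega) (by omega) i hi hlt).1
          have hLTi : frobInner (P m) (eprod (ttr A) (R i) + eprod (R i) (ttr C)) = 0 := by
            rcases eq_or_lt_of_le hi with he | h2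
            · rw [← he, ← hP1]
              exact (IH m (by omega) (by omega) 1 le_rfl (by omega)).2
            · obtain ⟨n, rfl⟩ : ∃ n, i = n + 1 := ⟨i - 1, by omega⟩
              have hn1 : 1 ≤ n := by omega
              rw [hLT n hn1, frobInner_sub_right, frobInner_smul_right,
                (IH m (by omega) (by omega) (n+1) (by omega) hlt).2,
                (IH m (by omega) (by omega) n hn1 (by omega)).2]
              ring
          rw [h1, hLTi]; ring
      have stepB : ∀ i, 1 ≤ i → i ≤ m → frobInner (P (m+1)) (P i) = 0 := by
        intro i hi him
        have hit : i < t := by omega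
        have hRi := frobInner_self_ne_zero _ (hnz i hi hit).1
        have hPi := frobInner_self_ne_zero _ (hnz i hi hit).2
        have expand : frobInner (P (m+1)) (P i)
            = frobInner (R (m+1)) (eprod A (P i) + eprod (P i) C)
              + (frobInner (R (m+1)) (R (m+1)) / frobInner (R m) (R m)) *
                frobInner (P m) (P i) := by
          rw [hP m hm1, frobInner_add_left, frobInner_smul_left, adjR]
        have hLPi : frobInner (R (m+1)) (R i) - frobInner (R (m+1)) (R (i+1))
            = (frobInner (R i) (R i) / frobInner (P i) (P i)) *
              frobInner (R (m+1)) (eprod A (P i) + eprod (P i) C) := by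
          rw [← frobInner_smul_right, ← frobInner_sub_right]
          congr 1
          rw [hRrec i hi, sub_sub_cancel]
        rw [stepA i hi him] at hLPi
        rw [expand]
        rcases eq_or_lt_of_le him with heq | hlt
        · subst heq
          have h2 : 0 - frobInner (R (i+1)) (R (i+1))
              = (frobInner (R i) (R i) / frobInner (P i) (P i)) *
                frobInner (R (i+1)) (eprod A (P i) + eprod (P i) C) := hLPi
          field_simp at h2 ⊢
          nlinarith [h2]
        · rw [stepA (i+1) (by omega) (by omega)] at hLPi
          have hz : frobInner (R (m+1)) (eprod A (P i) + eprod (P i) C) = 0 := by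
            rw [sub_zero] at hLPi
            rcases mul_eq_zero.mp hLPi.symm with h | h
            · exact absurd h (div_ne_zero hRi hPi)
            · exact h
          rw [hz, (IH m (by omega) (by omega) i hi hlt).2]
          ring
      exact ⟨stepA i hi (by omega), stepB i hi (by omega)⟩
  intro i j hi hit hj hjt hne
  constructor
  · show frobInner (R j) (R i) = 0
    rcases lt_or_gt_of_ne hne with h | h
    · exact (key j hjt i hi h).1
    · rw [frobInner_comm]; exact (key i hit j hj h).1
  · show frobInner (P j) (P i) = 0
    rcases lt_or_gt_of_ne hne with h | h
    · exact (key j hjt i hi h).2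
    · rw [frobInner_comm]; exact (key i hit j hj h).2
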